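/- Assume 1-H < Hd < 1, let κ > 0 and β > 0 with 1-Hd < Hβ < min(H, 2-2Hd). Then there is a constant c independent of n and K such that for all n ∈ ℕ, s > 0, 0 < K < ns/2, y ∈ ℝ^d: ∫_K^{ns/2} u^{-Hd} [∫_{ℝ^d} e^{-κ|ξ|²(s - u/n)^{2H}} |1 - e^{i ξ·y / n^H}| dξ] du ≤ c n^{1-Hd-Hβ} s^{1-2Hd-Hβ} |y|^β. -/

import Mathlib

open MeasureTheory Set
noncomputable section


variable {d : ℕ}

lemma gauss_int {b : ℝ} (hb : 0 < b) :
    Integrable (fun v : EuclideanSpace ℝ (Fin d) => Real.exp (-b * ‖v‖ ^ 2)) := by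
  have h := (GaussianFourier.integrable_cexp_neg_mul_sq_norm_add
    (b := (b : ℂ)) (by simpa using hb) 0 (0 : EuclideanSpace ℝ (Fin d))).norm
  convert h using 2 with v
  rw [Complex.norm_exp]
  norm_num
  exact Or.inl (by simp [← Complex.ofReal_pow])

lemma moment_int {b β : ℝ} (hb : 0 < b) (hβ0 : 0 < β) (hβ1 : β ≤ 1) :
    Integrable (fun v : EuclideanSpace ℝ (Fin d) => Real.exp (-b * ‖v‖ ^ 2) * ‖v‖ ^ β) := by
  have key : ∀ v : EuclideanSpace ℝ (Fin d),
      ‖Real.exp (-b * ‖v‖ ^ 2) * ‖v‖ ^ β‖ ≤ Real.exp (1/(2*b)) * Real.exp (-(b/2) * ‖v‖ ^ 2) := by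
    intro v
    set r := ‖v‖ with hr
    have hr0 : 0 ≤ r := norm_nonneg _
    rw [norm_mul, Real.norm_eq_abs, Real.norm_eq_abs, abs_of_nonneg (Real.exp_nonneg _),
      abs_of_nonneg (Real.rpow_nonneg hr0 β)]
    have hbd : r ^ β * Real.exp (-(b/2) * r ^ 2) ≤ Real.exp (1/(2*b)) := by
      rcases le_or_gt r 1 with h1 | h1
      · have hA : r ^ β ≤ 1 := Real.rpow_le_one hr0 h1 hβ0.le
        have hB : Real.exp (-(b/2) * r ^ 2) ≤ 1 := Real.exp_le_one_iff.2 (by nlinarith)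
        have : r ^ β * Real.exp (-(b/2) * r ^ 2) ≤ 1 :=
          mul_le_one₀ hA (Real.exp_nonneg _) hB
        exact this.trans (Real.one_le_exp (by positivity))
      · have h2 : r ^ β ≤ r := by
          calc r ^ β ≤ r ^ (1:ℝ) := Real.rpow_le_rpow_of_exponent_le h1.le hβ1
            _ = r := Real.rpow_one r
        have h3 : r ≤ Real.exp r := (Real.add_one_le_exp r).trans' (by linarith)
        have h4 : r ^ β * Real.exp (-(b/2) * r ^ 2) ≤ Real.exp r * Real.exp (-(b/2) * r ^ 2) := by
          apply mul_le_mul_of_nonneg_right (h2.trans h3) (Real.exp_nonneg _)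
        refine h4.trans ?_
        rw [← Real.exp_add]
        apply Real.exp_le_exp.2
        rw [show r + -(b/2) * r ^ 2 = r - b/2 * r^2 by ring, le_div_iff₀ (by positivity)]
        nlinarith [sq_nonneg (b * r - 1)]
    calc Real.exp (-b * r ^ 2) * r ^ β
        = Real.exp (-(b/2) * r ^ 2) * (r ^ β * Real.exp (-(b/2) * r ^ 2)) := by
          rw [show -b*r^2 = (-(b/2) * r ^ 2) + (-(b/2) * r ^ 2) by ring, Real.exp_add]; ring
      _ ≤ Real.exp (-(b/2) * r ^ 2) * Real.exp (1/(2*b)) := by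
          apply mul_le_mul_of_nonneg_left hbd (Real.exp_nonneg _)
      _ = Real.exp (1/(2*b)) * Real.exp (-(b/2) * r ^ 2) := mul_comm _ _
  have hm : AEStronglyMeasurable (fun v : EuclideanSpace ℝ (Fin d) => Real.exp (-b * ‖v‖ ^ 2) * ‖v‖ ^ β) volume := by
    apply Continuous.aestronglyMeasurable
    exact (Real.continuous_exp.comp (by continuity)).mul
      (continuous_norm.rpow_const (fun x => Or.inr hβ0.le))
  exact Integrable.mono' ((gauss_int (half_pos hb)).const_mul _) hm (Filter.Eventually.of_forall key)

lemma moment_eq {a β : ℝ} (ha : 0 < a) :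
    (∫ ξ : EuclideanSpace ℝ (Fin d), Real.exp (-a * ‖ξ‖ ^ 2) * ‖ξ‖ ^ β)
      = a ^ (-((d:ℝ) + β)/2) * ∫ ξ : EuclideanSpace ℝ (Fin d), Real.exp (-‖ξ‖ ^ 2) * ‖ξ‖ ^ β := by
  set R : ℝ := a ^ (-(1:ℝ)/2) with hRdef
  have hR : 0 < R := Real.rpow_pos_of_pos ha _
  have haR2 : a * R ^ 2 = 1 := by
    rw [hRdef, ← Real.rpow_natCast (a ^ (-(1:ℝ)/2)) 2, ← Real.rpow_mul ha.le]
    norm_num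
    exact Real.rpow_neg_one a ▸ (mul_inv_cancel₀ ha.ne')
  have key : ∀ x : EuclideanSpace ℝ (Fin d),
      Real.exp (-a * ‖R • x‖ ^ 2) * ‖R • x‖ ^ β = R ^ β * (Real.exp (-‖x‖ ^ 2) * ‖x‖ ^ β) := by
    intro x
    rw [norm_smul, Real.norm_eq_abs, abs_of_pos hR]
    rw [Real.mul_rpow hR.le (norm_nonneg x)]
    have : -a * (R * ‖x‖) ^ 2 = -‖x‖ ^ 2 := by
      have : a * (R * ‖x‖) ^ 2 = (a * R ^ 2) * ‖x‖ ^ 2 := by ring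
      rw [neg_mul, this, haR2, one_mul]
    rw [this]; ring
  have h1 := MeasureTheory.Measure.integral_comp_smul_of_nonneg (volume)
    (fun ξ : EuclideanSpace ℝ (Fin d) => Real.exp (-a * ‖ξ‖ ^ 2) * ‖ξ‖ ^ β) R (hR := hR.le)
  simp only [key] at h1
  rw [MeasureTheory.integral_const_mul, finrank_euclideanSpace_fin] at h1
  have h2 : (∫ ξ : EuclideanSpace ℝ (Fin d), Real.exp (-a * ‖ξ‖ ^ 2) * ‖ξ‖ ^ β)
      = R ^ (d:ℕ) * (R ^ β * ∫ ξ : EuclideanSpace ℝ (Fin d), Real.exp (-‖ξ‖ ^ 2) * ‖ξ‖ ^ β) := by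
    rw [h1, smul_eq_mul, ← mul_assoc, mul_inv_cancel₀ (pow_ne_zero _ hR.ne'), one_mul]
  rw [h2, ← mul_assoc]
  congr 1
  rw [hRdef, ← Real.rpow_natCast (a ^ (-(1:ℝ)/2)) d, ← Real.rpow_mul ha.le,
    ← Real.rpow_mul ha.le, ← Real.rpow_add ha]
  congr 1
  ring

lemma norm_one_sub_exp {β : ℝ} (hβ0 : 0 < β) (hβ1 : β ≤ 1) (θ : ℝ) :
    ‖1 - Complex.exp (Complex.I * θ)‖ ≤ 2 * |θ| ^ β := by
  rcases le_or_gt |θ| 1 with h | h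
  · have h0 : ‖Complex.I * θ‖ = |θ| := by simp
    have h2 := Complex.norm_exp_sub_one_le (x := Complex.I * θ) (by rw [h0]; exact h)
    rw [h0] at h2
    rw [norm_sub_rev]
    refine le_trans h2 ?_
    rcases eq_or_lt_of_le (abs_nonneg θ) with h3 | h3
    · rw [← h3, Real.zero_rpow hβ0.ne']
    · have : |θ| ≤ |θ| ^ β := by
        calc |θ| = |θ| ^ (1:ℝ) := (Real.rpow_one _).symm
          _ ≤ |θ| ^ β := Real.rpow_le_rpow_of_exponent_ge h3 h hβ1
      linarith
  · calc ‖1 - Complex.exp (Complex.I * θ)‖ ≤ ‖(1:ℂ)‖ + ‖Complex.exp (Complex.I * θ)‖ :=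
        norm_sub_le _ _
      _ = 2 := by
          simp [Complex.norm_exp]
          norm_num
      _ ≤ 2 * |θ| ^ β := by
          nlinarith [Real.one_le_rpow h.le hβ0.le]


theorem stmt_8 (d : ℕ) (hd : 1 ≤ d) (H : ℝ) (hH0 : 0 < H) (hH1 : H < 1)
    (hHd1 : 1 - H < H * d) (hHd2 : H * d < 1)
    (κ : ℝ) (hκ : 0 < κ)
    (β : ℝ) (hβ0 : 0 < β) (hβ1 : 1 - H * d < H * β)
    (hβ2 : H * β < min H (2 - 2 * (H * d))) :
    ∃ c : ℝ, ∀ (n : ℕ), 1 ≤ n → ∀ s : ℝ, 0 < s → ∀ K : ℝ, 0 < K → K < n * s / 2 →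
      ∀ y : EuclideanSpace ℝ (Fin d),
      (∫ u in Ioo K ((n:ℝ) * s / 2), u ^ (-(H * d)) *
          ∫ ξ : EuclideanSpace ℝ (Fin d),
            Real.exp (-κ * ‖ξ‖ ^ 2 * (s - u / n) ^ (2 * H)) *
              ‖1 - Complex.exp (Complex.I * ((inner ℝ ξ y / (n:ℝ) ^ H : ℝ) : ℂ))‖)
      ≤ c * (n:ℝ) ^ (1 - H * d - H * β) * s ^ (1 - 2 * (H * d) - H * β) * ‖y‖ ^ β := by
  have hβlt1 : β < 1 := by
    have h := lt_of_lt_of_le hβ2 (min_le_left _ _)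
    nlinarith
  have hd0 : (0:ℝ) < d := by exact_mod_cast hd
  set C₀ : ℝ := ∫ ξ : EuclideanSpace ℝ (Fin d), Real.exp (-‖ξ‖ ^ 2) * ‖ξ‖ ^ β with hC₀
  have hC₀0 : 0 ≤ C₀ := integral_nonneg fun ξ => by positivity
  have hp1 : 0 < 1 - H * d := by linarith
  set q : ℝ := H * ((d:ℝ) + β) with hq
  have hq0 : 0 < q := by positivity
  refine ⟨2 * κ ^ (-((d:ℝ) + β)/2) * C₀ * (2:ℝ) ^ (2*(H*d) + H*β - 1) / (1 - H*d), ?_⟩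
  intro n hn s hs K hK hKT y
  set T : ℝ := (n:ℝ) * s / 2 with hT
  have hn0 : (0:ℝ) < n := by exact_mod_cast hn
  have hT0 : 0 < T := lt_trans hK hKT
  set κ' : ℝ := κ ^ (-((d:ℝ) + β)/2) with hκ'
  have hκ'0 : 0 < κ' := Real.rpow_pos_of_pos hκ _
  set B : ℝ := 2 * ‖y‖ ^ β * (n:ℝ) ^ (-(H*β)) with hB
  have hB0 : 0 ≤ B := by positivity
  set D : ℝ := B * (κ' * ((s/2) ^ (-q)) * C₀) with hD
  have hD0 : 0 ≤ D := by positivity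
  -- pointwise bound on the inner integral
  have inner_bound : ∀ u : ℝ, u ∈ Ioo K T →
      (∫ ξ : EuclideanSpace ℝ (Fin d),
          Real.exp (-κ * ‖ξ‖ ^ 2 * (s - u / n) ^ (2 * H)) *
            ‖1 - Complex.exp (Complex.I * ((inner ℝ ξ y / (n:ℝ) ^ H : ℝ) : ℂ))‖) ≤ D := by
    intro u hu
    set t : ℝ := s - u / n with ht
    have hts : s / 2 ≤ t := by
      have : u / n < s / 2 := by
        rw [div_lt_iff₀ hn0]
        calc u < T := hu.2
          _ = s / 2 * n := by rw [hT]; ring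
      rw [ht]; linarith
    have ht0 : 0 < t := lt_of_lt_of_le (half_pos hs) hts
    set a : ℝ := κ * t ^ (2 * H) with ha
    have ha0 : 0 < a := by positivity
    have hnH : (0:ℝ) < (n:ℝ) ^ H := Real.rpow_pos_of_pos hn0 _
    have hpt : ∀ ξ : EuclideanSpace ℝ (Fin d),
        Real.exp (-κ * ‖ξ‖ ^ 2 * t ^ (2 * H)) *
            ‖1 - Complex.exp (Complex.I * ((inner ℝ ξ y / (n:ℝ) ^ H : ℝ) : ℂ))‖
          ≤ B * (Real.exp (-a * ‖ξ‖ ^ 2) * ‖ξ‖ ^ β) := by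
      intro ξ
      have hexp : -κ * ‖ξ‖ ^ 2 * t ^ (2 * H) = -a * ‖ξ‖ ^ 2 := by rw [ha]; ring
      rw [hexp]
      have hnorm : ‖1 - Complex.exp (Complex.I * ((inner ℝ ξ y / (n:ℝ) ^ H : ℝ) : ℂ))‖
          ≤ B * ‖ξ‖ ^ β := by
        have h1 : |inner ℝ ξ y / (n:ℝ) ^ H| ≤ ‖ξ‖ * ‖y‖ / (n:ℝ) ^ H := by
          rw [abs_div, abs_of_pos hnH]
          gcongr
          exact abs_real_inner_le_norm ξ y
        have h2 : |inner ℝ ξ y / (n:ℝ) ^ H| ^ β ≤ (‖ξ‖ * ‖y‖ / (n:ℝ) ^ H) ^ β :=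
          Real.rpow_le_rpow (abs_nonneg _) h1 hβ0.le
        have hn0' : (0:ℝ) ≤ (n:ℝ) := hn0.le
        have h3 : (‖ξ‖ * ‖y‖ / (n:ℝ) ^ H) ^ β
            = ‖ξ‖ ^ β * ‖y‖ ^ β * (n:ℝ) ^ (-(H * β)) := by
          rw [div_eq_mul_inv, Real.mul_rpow (by positivity) (by positivity),
            Real.mul_rpow (norm_nonneg _) (norm_nonneg _),
            Real.inv_rpow hnH.le, ← Real.rpow_mul hn0', ← Real.rpow_neg hn0']
        calc ‖1 - Complex.exp (Complex.I * ((inner ℝ ξ y / (n:ℝ) ^ H : ℝ) : ℂ))‖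
            ≤ 2 * |inner ℝ ξ y / (n:ℝ) ^ H| ^ β := norm_one_sub_exp hβ0 hβlt1.le _
          _ ≤ 2 * (‖ξ‖ * ‖y‖ / (n:ℝ) ^ H) ^ β := by linarith
          _ = B * ‖ξ‖ ^ β := by rw [h3, hB]; ring
      calc Real.exp (-a * ‖ξ‖ ^ 2) *
            ‖1 - Complex.exp (Complex.I * ((inner ℝ ξ y / (n:ℝ) ^ H : ℝ) : ℂ))‖
          ≤ Real.exp (-a * ‖ξ‖ ^ 2) * (B * ‖ξ‖ ^ β) :=
            mul_le_mul_of_nonneg_left hnorm (Real.exp_nonneg _)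
        _ = B * (Real.exp (-a * ‖ξ‖ ^ 2) * ‖ξ‖ ^ β) := by ring
    have hint : Integrable
        (fun ξ : EuclideanSpace ℝ (Fin d) => B * (Real.exp (-a * ‖ξ‖ ^ 2) * ‖ξ‖ ^ β)) :=
      (moment_int ha0 hβ0 hβlt1.le).const_mul B
    have step1 : (∫ ξ : EuclideanSpace ℝ (Fin d),
        Real.exp (-κ * ‖ξ‖ ^ 2 * t ^ (2 * H)) *
          ‖1 - Complex.exp (Complex.I * ((inner ℝ ξ y / (n:ℝ) ^ H : ℝ) : ℂ))‖)
        ≤ ∫ ξ : EuclideanSpace ℝ (Fin d), B * (Real.exp (-a * ‖ξ‖ ^ 2) * ‖ξ‖ ^ β) := by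
      refine integral_mono_of_nonneg (Filter.Eventually.of_forall fun ξ => by positivity)
        hint (Filter.Eventually.of_forall hpt)
    refine le_trans step1 ?_
    rw [integral_const_mul, moment_eq ha0, ← hC₀]
    have hstep2 : a ^ (-((d:ℝ) + β)/2) = κ' * t ^ (-q) := by
      rw [ha, Real.mul_rpow hκ.le (by positivity), hκ', ← Real.rpow_mul ht0.le]
      congr 1
      rw [hq]; ring
    rw [hstep2]
    have : t ^ (-q) ≤ (s/2) ^ (-q) :=
      Real.rpow_le_rpow_of_nonpos (half_pos hs) hts (by linarith)
    rw [hD]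
    exact mul_le_mul_of_nonneg_left
      (mul_le_mul_of_nonneg_right (mul_le_mul_of_nonneg_left this hκ'0.le) hC₀0) hB0
  -- outer integral
  have hmHd : (-1:ℝ) < -(H * d) := by
    have : H * d < 1 := hHd2
    linarith
  have hrint : IntegrableOn (fun u : ℝ => u ^ (-(H * d))) (Ioc 0 T) := by
    have h := intervalIntegral.intervalIntegrable_rpow' (a := 0) (b := T) (r := -(H * d)) hmHd
    rwa [intervalIntegrable_iff_integrableOn_Ioc_of_le hT0.le] at h
  have hrint' : IntegrableOn (fun u : ℝ => u ^ (-(H * d))) (Ioo K T) :=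
    hrint.mono_set fun x hx => ⟨lt_trans hK hx.1, hx.2.le⟩
  have step2 : (∫ u in Ioo K T, u ^ (-(H * d)) *
      ∫ ξ : EuclideanSpace ℝ (Fin d),
        Real.exp (-κ * ‖ξ‖ ^ 2 * (s - u / n) ^ (2 * H)) *
          ‖1 - Complex.exp (Complex.I * ((inner ℝ ξ y / (n:ℝ) ^ H : ℝ) : ℂ))‖)
      ≤ ∫ u in Ioo K T, D * u ^ (-(H * d)) := by
    refine integral_mono_of_nonneg ?_ (hrint'.const_mul D) ?_
    · filter_upwards [ae_restrict_mem measurableSet_Ioo] with u hu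
      have hu0 : 0 < u := lt_trans hK hu.1
      have hI : 0 ≤ ∫ ξ : EuclideanSpace ℝ (Fin d),
          Real.exp (-κ * ‖ξ‖ ^ 2 * (s - u / n) ^ (2 * H)) *
            ‖1 - Complex.exp (Complex.I * ((inner ℝ ξ y / (n:ℝ) ^ H : ℝ) : ℂ))‖ :=
        integral_nonneg fun ξ => by positivity
      exact mul_nonneg (Real.rpow_nonneg hu0.le _) hI
    · filter_upwards [ae_restrict_mem measurableSet_Ioo] with u hu
      have hu0 : 0 < u := lt_trans hK hu.1
      calc u ^ (-(H * d)) *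
          (∫ ξ : EuclideanSpace ℝ (Fin d),
            Real.exp (-κ * ‖ξ‖ ^ 2 * (s - u / n) ^ (2 * H)) *
              ‖1 - Complex.exp (Complex.I * ((inner ℝ ξ y / (n:ℝ) ^ H : ℝ) : ℂ))‖)
          ≤ u ^ (-(H * d)) * D :=
            mul_le_mul_of_nonneg_left (inner_bound u hu) (Real.rpow_nonneg hu0.le _)
        _ = D * u ^ (-(H * d)) := mul_comm _ _
  have step3 : (∫ u in Ioo K T, D * u ^ (-(H * d)))
      = D * ∫ u in Ioo K T, u ^ (-(H * d)) := integral_const_mul _ _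
  have step4 : (∫ u in Ioo K T, u ^ (-(H * d))) ≤ ∫ u in Ioo 0 T, u ^ (-(H * d)) := by
    refine setIntegral_mono_set (hrint.mono_set Ioo_subset_Ioc_self) ?_ ?_
    · filter_upwards [ae_restrict_mem measurableSet_Ioo] with u hu
      exact Real.rpow_nonneg hu.1.le _
    · exact HasSubset.Subset.eventuallyLE fun x hx => ⟨lt_trans hK hx.1, hx.2⟩
  have step5 : (∫ u in Ioo 0 T, u ^ (-(H * d))) = T ^ (1 - H * d) / (1 - H * d) := by
    rw [← integral_Ioc_eq_integral_Ioo, ← intervalIntegral.integral_of_le hT0.le,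
      integral_rpow (Or.inl hmHd),
      Real.zero_rpow (by linarith : -(H * d) + 1 ≠ 0), sub_zero,
      show -(H * d) + 1 = 1 - H * d by ring]
  -- arithmetic identities
  have hTrw : T ^ (1 - H * d) = (n:ℝ) ^ (1 - H * d) * (s/2) ^ (1 - H * d) := by
    rw [hT, show (n:ℝ) * s / 2 = (n:ℝ) * (s/2) by ring,
      Real.mul_rpow hn0.le (by positivity)]
  have hnrw : (n:ℝ) ^ (-(H * β)) * (n:ℝ) ^ (1 - H * d) = (n:ℝ) ^ (1 - H * d - H * β) := by
    rw [← Real.rpow_add hn0]; congr 1; ring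
  have hsY : (s/2) ^ (-q) * (s/2) ^ (1 - H * d)
      = s ^ (1 - 2 * (H * d) - H * β) * (2:ℝ) ^ (2 * (H * d) + H * β - 1) := by
    rw [← Real.rpow_add (half_pos hs),
      show -q + (1 - H * d) = 1 - 2 * (H * d) - H * β by rw [hq]; ring,
      div_eq_mul_inv, Real.mul_rpow hs.le (by norm_num),
      show (2:ℝ)⁻¹ = (2:ℝ) ^ (-1:ℝ) by rw [Real.rpow_neg_one],
      ← Real.rpow_mul (by norm_num : (0:ℝ) ≤ 2)]
    congr 1
    ring
  have hDT : D * (T ^ (1 - H * d) / (1 - H * d))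
      = 2 * κ' * C₀ * (2:ℝ) ^ (2 * (H * d) + H * β - 1) / (1 - H * d) *
          (n:ℝ) ^ (1 - H * d - H * β) * s ^ (1 - 2 * (H * d) - H * β) * ‖y‖ ^ β := by
    calc D * (T ^ (1 - H * d) / (1 - H * d))
        = (2 * ‖y‖ ^ β * κ' * C₀) * ((s/2) ^ (-q) * (s/2) ^ (1 - H * d)) *
            ((n:ℝ) ^ (-(H * β)) * (n:ℝ) ^ (1 - H * d)) / (1 - H * d) := by
          rw [hD, hB, hTrw]; ring
      _ = (2 * ‖y‖ ^ β * κ' * C₀) *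
            (s ^ (1 - 2 * (H * d) - H * β) * (2:ℝ) ^ (2 * (H * d) + H * β - 1)) *
            ((n:ℝ) ^ (1 - H * d - H * β)) / (1 - H * d) := by
          rw [hsY, hnrw]
      _ = _ := by ring
  refine le_trans step2 ?_
  rw [step3, ← hDT]
  have hfinal : D * (∫ u in Ioo K T, u ^ (-(H * d))) ≤ D * (T ^ (1 - H * d) / (1 - H * d)) := by
    refine mul_le_mul_of_nonneg_left ?_ hD0
    rw [← step5]
    exact step4
  exact hfinal
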